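/- arXiv:2604.22073 — 3 statements merged into one kernel-verified Lean document; each statement's English description precedes it below -/
import Mathlib

section
/- If λ > 0 and α : [0,T) → (0,∞) is a C² solution of α̈ = λ α^{-n(γ-1)-1} with α(0) = 1, then α(t) is bounded below by the positive constant α_* = (2λ/(n(γ-1)a))^{1/(n(γ-1))} where a = (α̇(0))² + 2λ/(n(γ-1)); in particular α never vanishes and no accumulation occurs. -/
/-- Case λ > 0: any positive C² solution of `α̈ = λ α^{-n(γ-1)-1}` on `[0,T)` with
`α(0) = 1` is bounded below by `α_* = (2λ/(n(γ-1)a))^{1/(n(γ-1))}`, where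
`a = (α̇(0))² + 2λ/(n(γ-1))`; moreover `α_* ≤ 1`.  In particular `α` never
vanishes and no accumulation occurs. -/
theorem lambda_pos_no_accumulation
    (n : ℕ) (hn : 1 ≤ n) (γ lam T : ℝ) (hγ : 1 < γ) (hlam : 0 < lam) (hT : 0 < T)
    (α α' : ℝ → ℝ)
    (hαpos : ∀ t ∈ Set.Ico (0:ℝ) T, 0 < α t)
    (hα0 : α 0 = 1)
    (hα' : ∀ t ∈ Set.Ico (0:ℝ) T, HasDerivAt α (α' t) t)
    (hα'' : ∀ t ∈ Set.Ico (0:ℝ) T,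
      HasDerivAt α' (lam * α t ^ (-(n * (γ - 1)) - 1)) t)
    (a : ℝ) (ha : a = (α' 0) ^ 2 + 2 * lam / (n * (γ - 1)))
    (αstar : ℝ) (hαstar : αstar = (2 * lam / (n * (γ - 1) * a)) ^ (1 / (n * (γ - 1)))) :
    (∀ t ∈ Set.Ico (0:ℝ) T, αstar ≤ α t) ∧ αstar ≤ 1 := by
  set k : ℝ := n * (γ - 1) with hk
  have hkpos : 0 < k := by
    have hn1 : (1:ℝ) ≤ (n:ℝ) := by exact_mod_cast hn
    have : 0 < γ - 1 := by linarith
    positivity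
  have hapos : 0 < a := by
    rw [ha]; positivity
  -- energy function
  set E : ℝ → ℝ := fun t => (α' t) ^ 2 + (2 * lam / k) * α t ^ (-k) with hE
  have hE0 : E 0 = a := by
    simp only [hE, hα0, Real.one_rpow, ha, mul_one]
  -- E has derivative 0 on Ico 0 T
  have hEderiv : ∀ t ∈ Set.Ico (0:ℝ) T, HasDerivAt E 0 t := by
    intro t ht
    have h1 : HasDerivAt (fun t => (α' t) ^ 2)
        (2 * α' t ^ 1 * (lam * α t ^ (-k - 1))) t := by
      simpa using (hα'' t ht).fun_pow 2
    have hne : α t ≠ 0 := (hαpos t ht).ne'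
    have h2 : HasDerivAt (fun t => α t ^ (-k))
        (α' t * -k * α t ^ (-k - 1)) t :=
      (hα' t ht).rpow_const (Or.inl hne)
    have h3 := h1.add (h2.const_mul (2 * lam / k))
    have hzero : 2 * α' t ^ 1 * (lam * α t ^ (-k - 1))
        + 2 * lam / k * (α' t * -k * α t ^ (-k - 1)) = 0 := by
      field_simp
      ring
    rw [hzero] at h3
    exact h3
  -- conservation: E t = a on Ico 0 T
  have hEconst : ∀ t ∈ Set.Ico (0:ℝ) T, E t = a := by
    intro t ht
    rcases eq_or_lt_of_le ht.1 with h0 | h0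
    · rw [← h0, hE0]
    have hsub : Set.Icc (0:ℝ) t ⊆ Set.Ico 0 T := fun x hx =>
      ⟨hx.1, lt_of_le_of_lt hx.2 ht.2⟩
    have hcont : ContinuousOn E (Set.Icc 0 t) := fun x hx =>
      ((hEderiv x (hsub hx)).continuousAt).continuousWithinAt
    have hder : ∀ x ∈ Set.Ico (0:ℝ) t, HasDerivWithinAt E 0 (Set.Ici x) x :=
      fun x hx => (hEderiv x (hsub ⟨hx.1, hx.2.le⟩)).hasDerivWithinAt
    have := constant_of_has_deriv_right_zero hcont hder t (Set.right_mem_Icc.mpr h0.le)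
    rw [this, hE0]
  -- main bound
  have hbase_pos : 0 < 2 * lam / (k * a) := by positivity
  have hmain : ∀ t ∈ Set.Ico (0:ℝ) T, αstar ≤ α t := by
    intro t ht
    have hαt : 0 < α t := hαpos t ht
    have hEt := hEconst t ht
    have hle : (2 * lam / k) * α t ^ (-k) ≤ a := by
      have : (0:ℝ) ≤ (α' t) ^ 2 := sq_nonneg _
      simp only [hE] at hEt; linarith
    have hpow_pos : 0 < α t ^ k := Real.rpow_pos_of_pos hαt k
    have hneg : α t ^ (-k) = (α t ^ k)⁻¹ := Real.rpow_neg hαt.le k ▸ rfl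
    have hkey : 2 * lam / (k * a) ≤ α t ^ k := by
      rw [hneg] at hle
      have h4 : 2 * lam / k * (α t ^ k)⁻¹ * (k * α t ^ k) = 2 * lam := by
        field_simp
      have h5 := mul_le_mul_of_nonneg_right hle
        (mul_nonneg hkpos.le hpow_pos.le)
      rw [h4] at h5
      rw [div_le_iff₀ (by positivity)]
      nlinarith
    have := Real.rpow_le_rpow hbase_pos.le hkey (by positivity : (0:ℝ) ≤ 1 / k)
    rw [hαstar]
    calc (2 * lam / (k * a)) ^ (1 / k) ≤ (α t ^ k) ^ (1 / k) := this
      _ = α t := by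
        rw [← Real.rpow_mul hαt.le, mul_one_div, div_self hkpos.ne', Real.rpow_one]
  refine ⟨hmain, ?_⟩
  have hle1 : 2 * lam / (k * a) ≤ 1 := by
    rw [div_le_one (by positivity)]
    rw [ha]
    have : (0:ℝ) ≤ (α' 0)^2 := sq_nonneg _
    have h2 : k * (2 * lam / k) = 2 * lam := by field_simp
    nlinarith [mul_le_mul_of_nonneg_left this hkpos.le]
  rw [hαstar]
  exact Real.rpow_le_one hbase_pos.le hle1 (by positivity)
end

section
/- With λ = 0, b < 0, n = 3, and singular initial density ρ̄(s) = s^{-2}, the curve r(t) = r(0)(1+bt) exp[1 - (1+bt)^{-3(γ-1)/2}] solves the 1-characteristic ODE ṙ = u - c, and r(t) → 0 as t → t_c = -1/b; thus all 1-characteristics accumulate at the origin exactly at the critical time. -/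
/-- Case λ = 0, b < 0, n = 3, singular initial density `ρ̄(s) = s^{-2}` (with the
normalization `2√(γp₀) = 3|b|(γ-1)`): the curve
`r(t) = r₀(1+bt) exp[1 - (1+bt)^{-3(γ-1)/2}]` solves the 1-characteristic ODE
`ṙ = u(t,r) - c(t,r)` with `u(t,r) = br/(1+bt)` and
`c(t,r) = √(γp₀)(1+bt)^{-3(γ-1)/2}·(r/(1+bt))`, and `r(t) → 0` as `t → t_c = -1/b`:
all 1-characteristics accumulate at the origin exactly at the critical time. -/
theorem one_characteristics_lambda_zero_singular_density
    (γ b p₀ r₀ : ℝ) (hγ : 1 < γ) (hb : b < 0) (hp₀ : 0 < p₀) (hr₀ : 0 < r₀)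
    (hnorm : 2 * Real.sqrt (γ * p₀) = 3 * |b| * (γ - 1))
    (tc : ℝ) (htc : tc = -1 / b)
    (r : ℝ → ℝ)
    (hr : ∀ t, r t = r₀ * (1 + b * t) *
      Real.exp (1 - (1 + b * t) ^ (-(3 * (γ - 1)) / 2))) :
    (∀ t ∈ Set.Ico (0:ℝ) tc, HasDerivAt r
      (b * r t / (1 + b * t)
        - Real.sqrt (γ * p₀) * (1 + b * t) ^ (-(3 * (γ - 1)) / 2)
          * (r t / (1 + b * t))) t) ∧
    Filter.Tendsto r (nhdsWithin tc (Set.Iio tc)) (nhds 0) := by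
  have hb0 : b ≠ 0 := ne_of_lt hb
  set α : ℝ := -(3 * (γ - 1)) / 2 with hα
  have hαneg : α < 0 := by
    have hg : 0 < γ - 1 := by linarith
    rw [hα]; linarith
  have habs : |b| = -b := abs_of_neg hb
  have hbα : b * α = Real.sqrt (γ * p₀) := by
    rw [habs] at hnorm
    rw [hα]; nlinarith [hnorm]
  have hbtc : b * tc = -1 := by rw [htc]; field_simp
  have htc0 : 0 < tc := by
    rw [htc]; exact div_pos_of_neg_of_neg (by norm_num) hb
  have hrF : r = fun t => r₀ * (1 + b * t) * Real.exp (1 - (1 + b * t) ^ α) :=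
    funext hr
  constructor
  · intro t ht
    have hapos : 0 < 1 + b * t := by
      have := mul_lt_mul_of_neg_left ht.2 hb
      nlinarith
    have hA : HasDerivAt (fun t : ℝ => 1 + b * t) b t := by
      simpa using ((hasDerivAt_id t).const_mul b).const_add 1
    have hrpow : HasDerivAt (fun t : ℝ => (1 + b * t) ^ α)
        (b * α * (1 + b * t) ^ (α - 1)) t :=
      hA.rpow_const (Or.inl hapos.ne')
    have hsub : HasDerivAt (fun t : ℝ => 1 - (1 + b * t) ^ α)
        (-(b * α * (1 + b * t) ^ (α - 1))) t := hrpow.const_sub 1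
    have hexp : HasDerivAt (fun t : ℝ => Real.exp (1 - (1 + b * t) ^ α))
        (Real.exp (1 - (1 + b * t) ^ α) * (-(b * α * (1 + b * t) ^ (α - 1)))) t :=
      hsub.exp
    have hf : HasDerivAt (fun t : ℝ => r₀ * (1 + b * t)) (r₀ * b) t := by
      simpa using (hA.const_mul r₀)
    have hF : HasDerivAt (fun t => r₀ * (1 + b * t) * Real.exp (1 - (1 + b * t) ^ α))
        (r₀ * b * Real.exp (1 - (1 + b * t) ^ α)
          + r₀ * (1 + b * t) *
            (Real.exp (1 - (1 + b * t) ^ α) * (-(b * α * (1 + b * t) ^ (α - 1))))) t :=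
      hf.mul hexp
    rw [hrF]
    convert hF using 1
    have hsub1 : (1 + b * t) ^ (α - 1) = (1 + b * t) ^ α / (1 + b * t) :=
      Real.rpow_sub_one hapos.ne' α
    simp only [← hbα, hsub1]
    field_simp
    ring
  · have hbound : Filter.Tendsto (fun t => r₀ * (1 + b * t))
        (nhdsWithin tc (Set.Iio tc)) (nhds 0) := by
      have hc : Continuous fun t : ℝ => r₀ * (1 + b * t) := by continuity
      have h2 : Filter.Tendsto (fun t => r₀ * (1 + b * t)) (nhdsWithin tc (Set.Iio tc))
          (nhds (r₀ * (1 + b * tc))) :=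
        (hc.tendsto tc).mono_left nhdsWithin_le_nhds
      simpa [hbtc] using h2
    have hmem : ∀ᶠ t in nhdsWithin tc (Set.Iio tc), t ∈ Set.Ioo 0 tc := by
      have h1 : Set.Ioi (0:ℝ) ∈ nhds tc := Ioi_mem_nhds htc0
      filter_upwards [eventually_mem_nhdsWithin,
        eventually_nhdsWithin_of_eventually_nhds (Filter.eventually_iff_exists_mem.mpr
          ⟨Set.Ioi 0, h1, fun x hx => hx⟩)] with t h2 h3
      exact ⟨h3, h2⟩
    apply squeeze_zero' (g := fun t => r₀ * (1 + b * t)) _ _ hbound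
    · filter_upwards [hmem] with t ht
      have hapos : 0 < 1 + b * t := by
        have := mul_lt_mul_of_neg_left ht.2 hb
        nlinarith
      rw [hr t]
      positivity
    · filter_upwards [hmem] with t ht
      have hapos : 0 < 1 + b * t := by
        have := mul_lt_mul_of_neg_left ht.2 hb
        nlinarith
      have ha1 : 1 + b * t ≤ 1 := by nlinarith [mul_pos_of_neg_of_neg hb (neg_neg_of_pos ht.1)]
      have h1le : 1 ≤ (1 + b * t) ^ α :=
        Real.one_le_rpow_of_pos_of_le_one_of_nonpos hapos ha1 hαneg.le
      have hexple : Real.exp (1 - (1 + b * t) ^ α) ≤ 1 :=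
        Real.exp_le_one_iff.mpr (by linarith)
      rw [hr t]
      exact mul_le_of_le_one_right (mul_pos hr₀ hapos).le hexple
end

section
/- For the affine motion R(t,s) = α(t)s with α solving α̈ = λ α^{-n(γ-1)-1}, α(0)=1, the fields ρ(t,r) = -α(t)^{1-n}/(λ r) · p̄'(r/α(t)), u(t,r) = (α̇(t)/α(t)) r, p(t,r) = α(t)^{-nγ} p̄(r/α(t)) solve the radial Euler system for an ideal gas with adiabatic exponent γ, provided λ ≠ 0 and p̄ is C² with sgn p̄' = -sgn λ. -/
/-- Case λ ≠ 0: for the affine motion `R(t,s) = α(t)s` with `α` solving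
`α̈ = λ α^{-n(γ-1)-1}`, `α(0) = 1`, and a C² reference pressure `p̄` with
`sgn p̄' = -sgn λ`, the fields `ρ(t,r) = -α^{1-n}/(λr) · p̄'(r/α)`,
`u(t,r) = (α̇/α) r`, `p(t,r) = α^{-nγ} p̄(r/α)` solve the radial Euler system
for an ideal gas with adiabatic exponent `γ` on `r > 0`. -/
theorem affine_flow_lambda_nonzero_solves_euler
    (n : ℕ) (hn : 1 ≤ n) (γ lam : ℝ) (hγ : 1 < γ) (hlam : lam ≠ 0)
    (I : Set ℝ) (hI : I.OrdConnected) (h0I : (0:ℝ) ∈ I)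
    (pbar pbar' pbar'' : ℝ → ℝ)
    (hpbar_pos : ∀ s, 0 < s → 0 < pbar s)
    (hpbar' : ∀ s, 0 < s → HasDerivAt pbar (pbar' s) s)
    (hpbar'' : ∀ s, 0 < s → HasDerivAt pbar' (pbar'' s) s)
    (hsgn : ∀ s, 0 < s → lam * pbar' s < 0)
    (α α' : ℝ → ℝ)
    (hαpos : ∀ t ∈ I, 0 < α t) (hα0 : α 0 = 1)
    (hα' : ∀ t ∈ I, HasDerivAt α (α' t) t)
    (hα'' : ∀ t ∈ I, HasDerivAt α' (lam * α t ^ (-(n * (γ - 1)) - 1)) t)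
    (ρ u p : ℝ → ℝ → ℝ)
    (hρ : ∀ t r, ρ t r = -(α t ^ ((1:ℝ) - n) / (lam * r)) * pbar' (r / α t))
    (hu : ∀ t r, u t r = (α' t / α t) * r)
    (hp : ∀ t r, p t r = α t ^ (-(n * γ)) * pbar (r / α t)) :
    ∀ t ∈ I, ∀ r : ℝ, 0 < r →
      (deriv (fun τ => ρ τ r) t + u t r * deriv (ρ t) r
        + ρ t r * (deriv (u t) r + (n - 1) * u t r / r) = 0) ∧
      (deriv (fun τ => u τ r) t + u t r * deriv (u t) r
        + deriv (p t) r / ρ t r = 0) ∧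
      (deriv (fun τ => p τ r) t + u t r * deriv (p t) r
        + γ * p t r * (deriv (u t) r + (n - 1) * u t r / r) = 0) := by
  intro t ht r hr
  have ha : 0 < α t := hαpos t ht
  have has : 0 < r / α t := div_pos hr ha
  have hda : HasDerivAt α (α' t) t := hα' t ht
  have hda' : HasDerivAt α' (lam * α t ^ (-(n * (γ - 1)) - 1)) t := hα'' t ht
  have hP : pbar' (r / α t) ≠ 0 := by
    intro h
    have := hsgn (r / α t) has
    rw [h, mul_zero] at this
    exact lt_irrefl 0 this
  have hAne : α t ^ ((1:ℝ) - n) ≠ 0 := (Real.rpow_pos_of_pos ha _).ne'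
  have hCne : α t ^ (-(n * γ) : ℝ) ≠ 0 := (Real.rpow_pos_of_pos ha _).ne'
  -- exponent identities
  have hsub1 : α t ^ ((1:ℝ) - n - 1) = α t ^ ((1:ℝ) - n) / α t := by
    rw [Real.rpow_sub ha, Real.rpow_one]
  have hsub2 : α t ^ (-(n * γ) - 1 : ℝ) = α t ^ (-(n * γ) : ℝ) / α t := by
    rw [Real.rpow_sub ha, Real.rpow_one]
  have hD : α t ^ (-(n * (γ - 1)) - 1 : ℝ)
      = α t ^ (-(n * γ) : ℝ) / α t ^ ((1:ℝ) - n) := by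
    rw [← Real.rpow_sub ha]
    congr 1; ring
  -- inner derivatives in τ
  have h2 : HasDerivAt (fun τ => r / α τ) ((0 * α t - r * α' t) / α t ^ 2) t :=
    (hasDerivAt_const t r).div hda ha.ne'
  -- ρ time derivative
  have h1 : HasDerivAt (fun τ => α τ ^ ((1:ℝ) - n))
      (α' t * ((1:ℝ) - n) * α t ^ ((1:ℝ) - n - 1)) t :=
    hda.rpow_const (Or.inl ha.ne')
  have h3 : HasDerivAt (fun τ => pbar' (r / α τ))
      (pbar'' (r / α t) * ((0 * α t - r * α' t) / α t ^ 2)) t :=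
    (hpbar'' _ has).comp t h2
  have h5 : HasDerivAt (fun τ => -(α τ ^ ((1:ℝ) - n) / (lam * r)) * pbar' (r / α τ))
      (-(α' t * ((1:ℝ) - n) * α t ^ ((1:ℝ) - n - 1) / (lam * r)) * pbar' (r / α t)
        + -(α t ^ ((1:ℝ) - n) / (lam * r))
          * (pbar'' (r / α t) * ((0 * α t - r * α' t) / α t ^ 2))) t :=
    ((h1.div_const _).neg).mul h3
  have hρt : deriv (fun τ => ρ τ r) t
      = -(α' t * ((1:ℝ) - n) * α t ^ ((1:ℝ) - n - 1) / (lam * r)) * pbar' (r / α t)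
        + -(α t ^ ((1:ℝ) - n) / (lam * r))
          * (pbar'' (r / α t) * ((0 * α t - r * α' t) / α t ^ 2)) := by
    have he : (fun τ => ρ τ r)
        = fun τ => -(α τ ^ ((1:ℝ) - n) / (lam * r)) * pbar' (r / α τ) :=
      funext fun τ => hρ τ r
    rw [he]; exact h5.deriv
  -- ρ space derivative
  have hg : HasDerivAt (fun x : ℝ => lam * x) lam r := by
    simpa using (hasDerivAt_id r).const_mul lam
  have h6 : HasDerivAt (fun x => α t ^ ((1:ℝ) - n) / (lam * x))
      ((0 * (lam * r) - α t ^ ((1:ℝ) - n) * lam) / (lam * r) ^ 2) r :=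
    (hasDerivAt_const r _).div hg (mul_ne_zero hlam hr.ne')
  have h8 : HasDerivAt (fun x => pbar' (x / α t)) (pbar'' (r / α t) * (1 / α t)) r :=
    (hpbar'' _ has).comp r ((hasDerivAt_id r).div_const (α t))
  have h9 : HasDerivAt (fun x => -(α t ^ ((1:ℝ) - n) / (lam * x)) * pbar' (x / α t))
      (-((0 * (lam * r) - α t ^ ((1:ℝ) - n) * lam) / (lam * r) ^ 2) * pbar' (r / α t)
        + -(α t ^ ((1:ℝ) - n) / (lam * r)) * (pbar'' (r / α t) * (1 / α t))) r :=
    (h6.neg).mul h8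
  have hρr : deriv (ρ t) r
      = -((0 * (lam * r) - α t ^ ((1:ℝ) - n) * lam) / (lam * r) ^ 2) * pbar' (r / α t)
        + -(α t ^ ((1:ℝ) - n) / (lam * r)) * (pbar'' (r / α t) * (1 / α t)) := by
    have he : ρ t = fun x => -(α t ^ ((1:ℝ) - n) / (lam * x)) * pbar' (x / α t) :=
      funext fun x => hρ t x
    rw [he]; exact h9.deriv
  -- u time derivative
  have h13 : HasDerivAt (fun τ => α' τ / α τ * r)
      ((lam * α t ^ (-(n * (γ - 1)) - 1) * α t - α' t * α' t) / α t ^ 2 * r) t :=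
    (hda'.div hda ha.ne').mul_const r
  have hut : deriv (fun τ => u τ r) t
      = (lam * α t ^ (-(n * (γ - 1)) - 1) * α t - α' t * α' t) / α t ^ 2 * r := by
    have he : (fun τ => u τ r) = fun τ => α' τ / α τ * r := funext fun τ => hu τ r
    rw [he]; exact h13.deriv
  -- u space derivative
  have h14 : HasDerivAt (fun x : ℝ => α' t / α t * x) (α' t / α t) r := by
    simpa using (hasDerivAt_id r).const_mul (α' t / α t)
  have hur : deriv (u t) r = α' t / α t := by
    have he : u t = fun x => α' t / α t * x := funext fun x => hu t x
    rw [he]; exact h14.deriv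
  -- p time derivative
  have h10 : HasDerivAt (fun τ => α τ ^ (-(n * γ) : ℝ))
      (α' t * (-(n * γ)) * α t ^ (-(n * γ) - 1 : ℝ)) t :=
    hda.rpow_const (Or.inl ha.ne')
  have h11 : HasDerivAt (fun τ => pbar (r / α τ))
      (pbar' (r / α t) * ((0 * α t - r * α' t) / α t ^ 2)) t :=
    (hpbar' _ has).comp t h2
  have h12 : HasDerivAt (fun τ => α τ ^ (-(n * γ) : ℝ) * pbar (r / α τ))
      (α' t * (-(n * γ)) * α t ^ (-(n * γ) - 1 : ℝ) * pbar (r / α t)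
        + α t ^ (-(n * γ) : ℝ) * (pbar' (r / α t) * ((0 * α t - r * α' t) / α t ^ 2))) t :=
    h10.mul h11
  have hpt : deriv (fun τ => p τ r) t
      = α' t * (-(n * γ)) * α t ^ (-(n * γ) - 1 : ℝ) * pbar (r / α t)
        + α t ^ (-(n * γ) : ℝ) * (pbar' (r / α t) * ((0 * α t - r * α' t) / α t ^ 2)) := by
    have he : (fun τ => p τ r) = fun τ => α τ ^ (-(n * γ) : ℝ) * pbar (r / α τ) :=
      funext fun τ => hp τ r
    rw [he]; exact h12.deriv
  -- p space derivative
  have h15 : HasDerivAt (fun x => α t ^ (-(n * γ) : ℝ) * pbar (x / α t))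
      (α t ^ (-(n * γ) : ℝ) * (pbar' (r / α t) * (1 / α t))) r :=
    ((hpbar' _ has).comp r ((hasDerivAt_id r).div_const (α t))).const_mul _
  have hpr : deriv (p t) r = α t ^ (-(n * γ) : ℝ) * (pbar' (r / α t) * (1 / α t)) := by
    have he : p t = fun x => α t ^ (-(n * γ) : ℝ) * pbar (x / α t) :=
      funext fun x => hp t x
    rw [he]; exact h15.deriv
  have hρne : ρ t r ≠ 0 := by
    rw [hρ t r]
    apply mul_ne_zero _ hP
    exact neg_ne_zero.mpr (div_ne_zero hAne (mul_ne_zero hlam hr.ne'))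
  refine ⟨?_, ?_, ?_⟩
  · rw [hρt, hρr, hur, hρ t r, hu t r, hsub1]
    field_simp
    ring
  · rw [hut, hur, hpr, hρ t r, hu t r, hD]
    rw [hρ t r] at hρne
    field_simp
    ring
  · rw [hpt, hpr, hur, hp t r, hu t r, hsub2]
    field_simp
    ring
end
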